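/- Let L/K be a finite Galois extension of fields with Galois group G = Gal(L/K), and let V be a K-vector space. Equip L ⊗_K V with the K-structure given by φ_σ(a ⊗ v) = σ(a) ⊗ v for σ ∈ G. Then the K-linear map V → (L ⊗_K V)^G sending v to 1 ⊗ v is bijective. -/

import Mathlib

open scoped TensorProduct

/-- **Galois descent, easy direction.**
Let `L/K` be a finite Galois extension with `G = Gal(L/K)` and `V` a
`K`-vector space. Equip `L ⊗[K] V` with the `K`-structure whose semilinear
maps are `φ_σ(a ⊗ v) = σ(a) ⊗ v` (i.e. `φ_σ = rTensor V σ`). Then the map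
`V → (L ⊗[K] V)^G`, `v ↦ 1 ⊗ v`, is bijective. -/
theorem stmt_0 (K L : Type*) [Field K] [Field L] [Algebra K L]
    [FiniteDimensional K L] [IsGalois K L]
    (V : Type*) [AddCommGroup V] [Module K V] :
    Function.Bijective (fun v : V =>
      (⟨(1 : L) ⊗ₜ[K] v, fun σ : L ≃ₐ[K] L => by
          simp [LinearMap.rTensor_tmul]⟩ :
        {x : L ⊗[K] V // ∀ σ : L ≃ₐ[K] L,
          LinearMap.rTensor V σ.toLinearMap x = x})) := by
  classical
  set b := Module.Basis.ofVectorSpace K V with hb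
  set B := b.baseChange L with hB
  have key : ∀ (σ : L ≃ₐ[K] L) (x : L ⊗[K] V) (i),
      B.repr (LinearMap.rTensor V σ.toLinearMap x) i = σ (B.repr x i) := by
    intro σ x i
    induction x using TensorProduct.induction_on with
    | zero => simp
    | tmul a v =>
        simp only [LinearMap.rTensor_tmul, AlgEquiv.toLinearMap_apply, hB,
          Module.Basis.baseChange_repr_tmul]
        rw [map_smul]
    | add x y hx hy => simp [hx, hy]
  have hone : ∀ (v : V) (i), B.repr ((1 : L) ⊗ₜ[K] v) i = algebraMap K L (b.repr v i) := by
    intro v i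
    simp [hB, Algebra.algebraMap_eq_smul_one]
  constructor
  · intro v w h
    have h1 : (1 : L) ⊗ₜ[K] v = (1 : L) ⊗ₜ[K] w := congrArg Subtype.val h
    have h2 : b.repr v = b.repr w := by
      ext i
      have := congrArg (fun z => B.repr z i) h1
      simp only [hone] at this
      exact (algebraMap K L).injective this
    exact b.repr.injective h2
  · rintro ⟨x, hx⟩
    have hbot : IntermediateField.fixedField (⊤ : Subgroup (L ≃ₐ[K] L)) =
        (⊥ : IntermediateField K L) :=
      OrderIso.map_bot (IsGalois.intermediateFieldEquivSubgroup (F := K) (E := L)).symm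
    have hrange : ∀ i, ∃ k : K, algebraMap K L k = B.repr x i := by
      intro i
      have hmem : B.repr x i ∈ IntermediateField.fixedField (⊤ : Subgroup (L ≃ₐ[K] L)) := by
        rintro ⟨σ, -⟩
        show σ (B.repr x i) = B.repr x i
        rw [← key σ x i, hx σ]
      rw [hbot, IntermediateField.mem_bot] at hmem
      exact hmem
    set g : L → K := fun a => if h : ∃ k : K, algebraMap K L k = a then h.choose else 0
      with hg
    have hgspec : ∀ a : L, (∃ k : K, algebraMap K L k = a) → algebraMap K L (g a) = a := by
      intro a ha
      simp only [hg, dif_pos ha]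
      exact ha.choose_spec
    have hg0 : g 0 = 0 := by
      have h0 : ∃ k : K, algebraMap K L k = 0 := ⟨0, map_zero _⟩
      apply (algebraMap K L).injective
      rw [hgspec 0 h0]; rw [map_zero]
    refine ⟨b.repr.symm ((B.repr x).mapRange g hg0), Subtype.ext ?_⟩
    apply B.repr.injective
    ext i
    rw [hone]
    simp only [LinearEquiv.apply_symm_apply, Finsupp.mapRange_apply]
    exact hgspec _ (hrange i)
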